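/- arXiv:math/9605221 — 2 statements merged into one kernel-verified Lean document; each statement's English description precedes it below -/
import Mathlib

section
/- Let d_1 ≤ d_2 ≤ … ≤ d_m be real numbers with m ≥ 2, d_1 ≥ 1, and d_{i+1} − d_i ≤ 1 for every 1 ≤ i ≤ m−1. Call a canonical interval I_{jkl} empty if no d_i belongs to I_{jkl}. Then ∑_{i=1}^{m−1} (d_{i+1} − d_i)² ≤ 16 · ∑ |I_{jkl}|², where the (possibly infinite) sum on the right is taken over all empty canonical intervals I_{jkl} with j ≥ 1, k ≥ 0, 1 ≤ l ≤ 2^k. -/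
open scoped BigOperators ENNReal

/-- The canonical interval `I_{jkl} = [j + (l-1)·2⁻ᵏ, j + l·2⁻ᵏ)`, obtained by dividing
`[j, j+1)` into `2ᵏ` equal parts. -/
def canonicalInterval (j k l : ℕ) : Set ℝ :=
  Set.Ico ((j : ℝ) + ((l : ℝ) - 1) * ((2 : ℝ) ^ k)⁻¹) ((j : ℝ) + (l : ℝ) * ((2 : ℝ) ^ k)⁻¹)

lemma canonicalInterval_nonempty (j k l : ℕ) : (canonicalInterval j k l).Nonempty := by
  refine ⟨_, Set.left_mem_Ico.2 ?_⟩
  have h : (0:ℝ) < ((2:ℝ)^k)⁻¹ := by positivity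
  linarith

lemma exists_pow_between (g : ℝ) (hg : 0 < g) (hg1 : g ≤ 1) :
    ∃ k : ℕ, 2 ≤ g * 2 ^ k ∧ g * 2 ^ k < 4 := by
  classical
  have hex : ∃ k : ℕ, 2 ≤ g * 2 ^ k := by
    obtain ⟨k, hk⟩ := pow_unbounded_of_one_lt (2 / g) (by norm_num : (1:ℝ) < 2)
    exact ⟨k, by rw [div_lt_iff₀ hg] at hk; nlinarith⟩
  set k := Nat.find hex with hkdef
  have hk : 2 ≤ g * 2 ^ k := Nat.find_spec hex
  have hk1 : 1 ≤ k := by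
    rcases Nat.eq_zero_or_pos k with h0 | h1
    · exfalso; rw [h0] at hk; simp at hk; linarith
    · exact h1
  have hprev : ¬ (2 ≤ g * 2 ^ (k - 1)) := Nat.find_min hex (by omega)
  push_neg at hprev
  refine ⟨k, hk, ?_⟩
  have : (2:ℝ) ^ k = 2 * 2 ^ (k - 1) := by
    rw [← pow_succ']
    congr 1
    omega
  rw [this]
  nlinarith

/-- Key: inside any `(a,b)` with `a ≥ 1`, `0 < b - a ≤ 1`, there is a canonical
interval of length more than `(b-a)/4`. -/
lemma key (a b : ℝ) (ha : 1 ≤ a) (hab : a < b) (hb : b - a ≤ 1) :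
    ∃ t : ℕ × ℕ × ℕ, 1 ≤ t.1 ∧ 1 ≤ t.2.2 ∧ t.2.2 ≤ 2 ^ t.2.1 ∧
      canonicalInterval t.1 t.2.1 t.2.2 ⊆ Set.Ioo a b ∧
      (b - a) ^ 2 ≤ 16 * (((2 : ℝ) ^ t.2.1)⁻¹) ^ 2 := by
  obtain ⟨k, hk2, hk4⟩ := exists_pow_between (b - a) (by linarith) hb
  have hpow : (0:ℝ) < 2 ^ k := by positivity
  set h : ℝ := ((2:ℝ) ^ k)⁻¹ with hh
  have hhpos : 0 < h := by positivity
  have hhk : (2:ℝ) ^ k * h = 1 := mul_inv_cancel₀ (ne_of_gt hpow)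
  set n : ℕ := ⌊a * 2 ^ k⌋₊ + 1 with hn
  have ha0 : 0 ≤ a * 2 ^ k := by positivity
  have hn1 : (n : ℝ) ≤ a * 2 ^ k + 1 := by
    rw [hn]
    push_cast
    have := Nat.floor_le ha0
    linarith
  have hn2 : a * 2 ^ k < (n : ℝ) := by
    rw [hn]
    push_cast
    exact Nat.lt_floor_add_one _
  have hnk : 2 ^ k + 1 ≤ n := by
    have : (2:ℝ) ^ k ≤ a * 2 ^ k := by nlinarith
    have h2 : 2 ^ k ≤ ⌊a * 2 ^ k⌋₊ := Nat.le_floor (by push_cast; linarith)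
    omega
  -- real bounds on x = n * h
  have hx1 : a < (n : ℝ) * h := by
    have := mul_lt_mul_of_pos_right hn2 hhpos
    rw [mul_assoc, hhk, mul_one] at this
    linarith [this]
  have hx2 : (n : ℝ) * h ≤ a + h := by
    have := mul_le_mul_of_nonneg_right hn1 (le_of_lt hhpos)
    rw [add_mul, mul_assoc, hhk, mul_one, one_mul] at this
    linarith
  have h2h : 2 * h ≤ b - a := by
    have := mul_le_mul_of_nonneg_right hk2 (le_of_lt hhpos)
    rw [mul_assoc, hhk, mul_one] at this
    linarith
  refine ⟨(n / 2 ^ k, k, n % 2 ^ k + 1), ?_, le_add_self, ?_, ?_, ?_⟩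
  · exact (Nat.one_le_div_iff (Nat.pow_pos (by norm_num))).2 (by omega)
  · show n % 2 ^ k + 1 ≤ 2 ^ k
    have := Nat.mod_lt n (show 0 < 2 ^ k from Nat.pow_pos (by norm_num))
    omega
  · -- subset of Ioo
    have hstart : ((n / 2 ^ k : ℕ) : ℝ) + (((n % 2 ^ k + 1 : ℕ) : ℝ) - 1) * h = (n : ℝ) * h := by
      have hdm : (n / 2 ^ k) * 2 ^ k + n % 2 ^ k = n := Nat.div_add_mod' n (2 ^ k)
      have hcast : ((n / 2 ^ k : ℕ) : ℝ) * (2:ℝ) ^ k + ((n % 2 ^ k : ℕ) : ℝ) = (n : ℝ) := by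
        exact_mod_cast congrArg (Nat.cast (R := ℝ)) hdm
      rw [Nat.cast_add, Nat.cast_one, add_sub_cancel_right, ← hcast, add_mul, mul_assoc, hhk,
        mul_one]
    intro y hy
    rw [canonicalInterval, Set.mem_Ico] at hy
    obtain ⟨hy1, hy2⟩ := hy
    rw [hstart] at hy1
    constructor
    · linarith
    · have : ((n / 2 ^ k : ℕ) : ℝ) + ((n % 2 ^ k + 1 : ℕ) : ℝ) * h = (n : ℝ) * h + h := by
        push_cast at hstart ⊢
        linarith [hstart]
      rw [this] at hy2
      linarith
  · -- size
    have hba : b - a < 4 * h := by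
      have := mul_lt_mul_of_pos_right hk4 hhpos
      rw [mul_assoc, hhk, mul_one] at this
      linarith
    nlinarith [hhpos, sub_nonneg.2 (le_of_lt hab)]

/-- If `d 0 ≤ … ≤ d (m-1)` is a nondecreasing sequence of `m ≥ 2` reals with `d 0 ≥ 1`
and all consecutive gaps at most `1`, then the sum of the squares of the gaps is at most
`16` times the sum of `|I_{jkl}|²` over all canonical intervals (with `j ≥ 1`, `k ≥ 0`,
`1 ≤ l ≤ 2ᵏ`) containing none of the `d i`; the latter sum is taken in `[0, ∞]`. -/
theorem sum_sq_gaps_le_sum_sq_empty_canonical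
    (m : ℕ) (hm : 2 ≤ m) (d : ℕ → ℝ)
    (hmono : ∀ i, i + 1 < m → d i ≤ d (i + 1))
    (hfirst : 1 ≤ d 0)
    (hgap : ∀ i, i + 1 < m → d (i + 1) - d i ≤ 1) :
    ENNReal.ofReal (∑ i ∈ Finset.range (m - 1), (d (i + 1) - d i) ^ 2) ≤
      16 * ∑' t : {t : ℕ × ℕ × ℕ //
          1 ≤ t.1 ∧ 1 ≤ t.2.2 ∧ t.2.2 ≤ 2 ^ t.2.1 ∧
          ∀ i < m, d i ∉ canonicalInterval t.1 t.2.1 t.2.2},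
        (ENNReal.ofReal (((2 : ℝ) ^ t.1.2.1)⁻¹)) ^ 2 := by
  classical
  -- monotonicity on the whole range
  have hmono' : ∀ i i', i ≤ i' → i' < m → d i ≤ d i' := by
    intro i i' hle
    induction hle with
    | refl => exact fun _ => le_rfl
    | @step k hk ih =>
      intro hlt
      exact (ih (Nat.lt_of_succ_lt hlt)).trans (hmono k hlt)
  -- choose a canonical interval for each positive gap
  have hchoice : ∀ i : ℕ, ∃ t : ℕ × ℕ × ℕ,
      (i + 1 < m ∧ d i < d (i + 1)) →
      (1 ≤ t.1 ∧ 1 ≤ t.2.2 ∧ t.2.2 ≤ 2 ^ t.2.1 ∧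
        canonicalInterval t.1 t.2.1 t.2.2 ⊆ Set.Ioo (d i) (d (i + 1)) ∧
        (d (i + 1) - d i) ^ 2 ≤ 16 * (((2 : ℝ) ^ t.2.1)⁻¹) ^ 2) := by
    intro i
    by_cases hi : i + 1 < m ∧ d i < d (i + 1)
    · obtain ⟨t, ht⟩ := key (d i) (d (i + 1))
        (le_trans hfirst (hmono' 0 i (Nat.zero_le _) (Nat.lt_of_succ_lt hi.1))) hi.2 (hgap i hi.1)
      exact ⟨t, fun _ => ht⟩
    · exact ⟨(1, 0, 1), fun h => absurd h hi⟩
  choose F hF using hchoice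
  set S : Finset ℕ := (Finset.range (m - 1)).filter (fun i => d i < d (i + 1)) with hS
  have hSmem : ∀ i ∈ S, i + 1 < m ∧ d i < d (i + 1) := by
    intro i hi
    rw [hS, Finset.mem_filter, Finset.mem_range] at hi
    exact ⟨by omega, hi.2⟩
  set T := {t : ℕ × ℕ × ℕ //
      1 ≤ t.1 ∧ 1 ≤ t.2.2 ∧ t.2.2 ≤ 2 ^ t.2.1 ∧
      ∀ i < m, d i ∉ canonicalInterval t.1 t.2.1 t.2.2} with hT
  -- the map into the index type
  have hGdef : ∀ i (hi : i ∈ S),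
      1 ≤ (F i).1 ∧ 1 ≤ (F i).2.2 ∧ (F i).2.2 ≤ 2 ^ (F i).2.1 ∧
      ∀ i' < m, d i' ∉ canonicalInterval (F i).1 (F i).2.1 (F i).2.2 := by
    intro i hi
    obtain ⟨h1, h2, h3, hsub, _⟩ := hF i (hSmem i hi)
    refine ⟨h1, h2, h3, fun i' hi' hmem => ?_⟩
    obtain ⟨hlo, hhi⟩ := hsub hmem
    rcases le_or_gt i' i with hcase | hcase
    · exact absurd (hmono' i' i hcase (Nat.lt_of_succ_lt (hSmem i hi).1)) (not_le.2 hlo)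
    · exact absurd (hmono' (i + 1) i' hcase hi') (not_le.2 hhi)
  let G : {i // i ∈ S} → T := fun i => ⟨F i.1, hGdef i.1 i.2⟩
  -- injectivity
  have hGinj : Function.Injective G := by
    intro x y hxy
    have hFeq : F x.1 = F y.1 := congrArg Subtype.val hxy
    by_contra hne
    have hne' : x.1 ≠ y.1 := fun h => hne (Subtype.ext h)
    obtain ⟨_, _, _, hsubx, _⟩ := hF x.1 (hSmem x.1 x.2)
    obtain ⟨_, _, _, hsuby, _⟩ := hF y.1 (hSmem y.1 y.2)
    obtain ⟨z, hz⟩ := canonicalInterval_nonempty (F x.1).1 (F x.1).2.1 (F x.1).2.2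
    have hzx := hsubx hz
    have hzy := hsuby (hFeq ▸ hz)
    rcases lt_or_gt_of_ne hne' with hlt | hlt
    · have : d (x.1 + 1) ≤ d y.1 := hmono' (x.1 + 1) y.1 hlt (Nat.lt_of_succ_lt (hSmem y.1 y.2).1)
      exact absurd (hzy.1.trans hzx.2) (by linarith)
    · have : d (y.1 + 1) ≤ d x.1 := hmono' (y.1 + 1) x.1 hlt (Nat.lt_of_succ_lt (hSmem x.1 x.2).1)
      exact absurd (hzx.1.trans hzy.2) (by linarith)
  -- main estimate
  have hnonneg : ∀ i ∈ Finset.range (m - 1), 0 ≤ (d (i + 1) - d i) ^ 2 := fun i _ => sq_nonneg _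
  rw [ENNReal.ofReal_sum_of_nonneg hnonneg]
  have hzero : ∀ i ∈ Finset.range (m - 1), i ∉ S → ENNReal.ofReal ((d (i + 1) - d i) ^ 2) = 0 := by
    intro i hi hiS
    rw [hS, Finset.mem_filter] at hiS
    push_neg at hiS
    have h1 : d (i + 1) ≤ d i := hiS hi
    have h2 : d i ≤ d (i + 1) := hmono i (by rw [Finset.mem_range] at hi; omega)
    have h3 : d (i + 1) - d i = 0 := by linarith
    rw [h3]
    simp
  rw [← Finset.sum_subset (hS ▸ Finset.filter_subset _ _) hzero]
  have hbound : ∀ i ∈ S, ENNReal.ofReal ((d (i + 1) - d i) ^ 2) ≤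
      16 * (ENNReal.ofReal (((2 : ℝ) ^ (F i).2.1)⁻¹)) ^ 2 := by
    intro i hi
    obtain ⟨_, _, _, _, hsize⟩ := hF i (hSmem i hi)
    calc ENNReal.ofReal ((d (i + 1) - d i) ^ 2)
        ≤ ENNReal.ofReal (16 * (((2 : ℝ) ^ (F i).2.1)⁻¹) ^ 2) := ENNReal.ofReal_le_ofReal hsize
      _ = 16 * (ENNReal.ofReal (((2 : ℝ) ^ (F i).2.1)⁻¹)) ^ 2 := by
        rw [ENNReal.ofReal_mul (by norm_num), ENNReal.ofReal_pow (by positivity)]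
        norm_num
  refine le_trans (Finset.sum_le_sum hbound) ?_
  rw [← Finset.mul_sum]
  refine mul_le_mul_right ?_ 16
  have hrw : ∑ i ∈ S, (ENNReal.ofReal (((2 : ℝ) ^ (F i).2.1)⁻¹)) ^ 2
      = ∑ t ∈ S.attach.image G, (ENNReal.ofReal (((2 : ℝ) ^ t.1.2.1)⁻¹)) ^ 2 := by
    rw [Finset.sum_image (fun x _ y _ h => hGinj h)]
    exact (Finset.sum_attach S (fun i => (ENNReal.ofReal (((2 : ℝ) ^ (F i).2.1)⁻¹)) ^ 2)).symm
  rw [hrw]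
  exact ENNReal.sum_le_tsum _
end

section
/- There exist constants c > 0, C > 0 and an integer n₀ such that for every n ≥ n₀, every real a with 1 ≤ a ≤ 1.96·n^{4/7}, and every real δ with 0 < δ ≤ 1/min(a, n^{3/7}), the 4-dimensional Lebesgue measure of the set {(x, y) ∈ X₁ × X₁ : a ≤ ‖x − y‖ ≤ a + δ} lies between c · n · min(a, n^{3/7}) · δ and C · n · min(a, n^{3/7}) · δ, where X₁ = [−n^{3/7}, n^{3/7}] × [−0.99·n^{4/7}, 0.99·n^{4/7}] ⊆ ℝ². -/
open MeasureTheory Set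

set_option maxHeartbeats 2000000


lemma vol_shear_eq (A B : Set ℂ) (hS : MeasurableSet {p : ℂ × ℂ | p.1 ∈ A ∧ p.2 - p.1 ∈ B}) :
    volume {p : ℂ × ℂ | p.1 ∈ A ∧ p.2 - p.1 ∈ B} = volume A * volume B := by
  have hT : MeasurePreserving (fun z : ℂ × ℂ => (z.1, z.1 + z.2)) volume volume := by
    rw [Measure.volume_eq_prod]
    exact measurePreserving_prod_add volume volume
  have h1 := hT.measure_preimage (s := {p : ℂ × ℂ | p.1 ∈ A ∧ p.2 - p.1 ∈ B})
    hS.nullMeasurableSet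
  have h2 : (fun z : ℂ × ℂ => (z.1, z.1 + z.2)) ⁻¹' {p : ℂ × ℂ | p.1 ∈ A ∧ p.2 - p.1 ∈ B}
      = A ×ˢ B := by
    ext ⟨z, d⟩
    simp [Set.mem_prod, add_sub_cancel_left]
  rw [h2] at h1
  rw [← h1, Measure.volume_eq_prod, Measure.prod_prod]

lemma vol_complex_preimage (s : Set (ℝ × ℝ)) (hs : MeasurableSet s) :
    volume (Complex.measurableEquivRealProd ⁻¹' s) = volume s :=
  Complex.volume_preserving_equiv_real_prod.measure_preimage hs.nullMeasurableSet

lemma complex_abs_eq_sqrt (d : ℂ) : ‖d‖ = Real.sqrt (d.re^2 + d.im^2) := by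
  rw [Complex.norm_def, Complex.normSq_apply]; ring_nf

/-- Lower bound for the volume of the region between the two circle arcs. -/
lemma Dlow_volume (a δ U : ℝ) (ha : 1 ≤ a) (hδ : 0 < δ) (hU0 : 0 < U) (hUa : U ≤ a/2)
    (hδa : δ ≤ a) :
    ENNReal.ofReal (U * (δ/2)) ≤
      volume (Complex.measurableEquivRealProd ⁻¹'
        (regionBetween (fun u => Real.sqrt (a^2 - u^2))
          (fun u => Real.sqrt ((a+δ)^2 - u^2)) (Set.Ioo 0 U))) := by
  set f : ℝ → ℝ := fun u => Real.sqrt (a^2 - u^2) with hfdef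
  set g : ℝ → ℝ := fun u => Real.sqrt ((a+δ)^2 - u^2) with hgdef
  have hfc : Continuous f := (continuous_const.sub (continuous_pow 2)).sqrt
  have hgc : Continuous g := (continuous_const.sub (continuous_pow 2)).sqrt
  have hf_int : IntegrableOn f (Set.Ioo 0 U) :=
    (hfc.integrableOn_Icc (a := 0) (b := U)).mono_set Set.Ioo_subset_Icc_self
  have hg_int : IntegrableOn g (Set.Ioo 0 U) :=
    (hgc.integrableOn_Icc (a := 0) (b := U)).mono_set Set.Ioo_subset_Icc_self
  have hfg : ∀ x ∈ Set.Ioo 0 U, f x ≤ g x := by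
    intro x _
    exact Real.sqrt_le_sqrt (by nlinarith)
  rw [vol_complex_preimage _
      (measurableSet_regionBetween hfc.measurable hgc.measurable measurableSet_Ioo),
    Measure.volume_eq_prod, volume_regionBetween_eq_integral hf_int hg_int measurableSet_Ioo hfg]
  apply ENNReal.ofReal_le_ofReal
  have hconst : ∫ _ in Set.Ioo 0 U, (δ/2) = U * (δ/2) := by
    rw [MeasureTheory.setIntegral_const, measureReal_def, Real.volume_Ioo, sub_zero,
      ENNReal.toReal_ofReal hU0.le, smul_eq_mul]
  rw [← hconst]
  apply MeasureTheory.setIntegral_mono_on (integrableOn_const ?_) (hg_int.sub hf_int)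
    measurableSet_Ioo ?_
  · rw [Real.volume_Ioo]; exact ENNReal.ofReal_ne_top
  · intro x hx
    obtain ⟨hx0, hxU⟩ := hx
    have hxa : x < a/2 := lt_of_lt_of_le hxU hUa
    have h2 : (0:ℝ) ≤ a^2 - x^2 := by nlinarith
    have hfx : f x ≤ a := by
      rw [hfdef]
      calc Real.sqrt (a^2 - x^2) ≤ Real.sqrt (a^2) := Real.sqrt_le_sqrt (by nlinarith)
        _ = a := Real.sqrt_sq (by linarith)
    have hfnn : 0 ≤ f x := Real.sqrt_nonneg _
    have hsq : f x ^ 2 = a^2 - x^2 := Real.sq_sqrt h2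
    show δ/2 ≤ (g - f) x
    rw [Pi.sub_apply]
    have : f x + δ/2 ≤ g x := by
      rw [hgdef]
      refine (Real.le_sqrt (by positivity) (by nlinarith)).mpr ?_
      nlinarith
    linarith
/-- Annulus bound: near regime. -/
lemma D2_volume_near (a δ W : ℝ) (ha : 0 < a) (hδ : 0 < δ) :
    volume {d : ℂ | |d.re| ≤ 2*W ∧ a ≤ ‖d‖ ∧ ‖d‖ ≤ a + δ} ≤
      ENNReal.ofReal (Real.pi * (2*a*δ + δ^2)) := by
  have hsub : {d : ℂ | |d.re| ≤ 2*W ∧ a ≤ ‖d‖ ∧ ‖d‖ ≤ a + δ} ⊆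
      Metric.closedBall 0 (a+δ) \ Metric.ball 0 a := by
    rintro d ⟨-, h1, h2⟩
    constructor
    · simpa [Complex.dist_eq] using h2
    · simp only [Metric.mem_ball, Complex.dist_eq, sub_zero, not_lt]
      exact h1
  refine le_trans (measure_mono hsub) ?_
  rw [measure_diff (Metric.ball_subset_closedBall.trans (Metric.closedBall_subset_closedBall (by linarith))) measurableSet_ball.nullMeasurableSet
    measure_ball_lt_top.ne]
  have hcb : volume (Metric.closedBall (0:ℂ) (a+δ)) = ENNReal.ofReal ((a+δ)^2 * Real.pi) := by
    rw [Complex.volume_closedBall, ← NNReal.coe_real_pi, ← ENNReal.ofReal_coe_nnreal,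
      ← ENNReal.ofReal_pow (by positivity), ← ENNReal.ofReal_mul (by positivity)]
  have hb : volume (Metric.ball (0:ℂ) a) = ENNReal.ofReal (a^2 * Real.pi) := by
    rw [Complex.volume_ball, ← NNReal.coe_real_pi, ← ENNReal.ofReal_coe_nnreal,
      ← ENNReal.ofReal_pow (by positivity), ← ENNReal.ofReal_mul (by positivity)]
  rw [hcb, hb, ← ENNReal.ofReal_sub _ (by positivity)]
  apply ENNReal.ofReal_le_ofReal
  nlinarith [Real.pi_pos]

/-- Annulus-strip bound: far regime. -/
lemma D2_volume_far (a δ W : ℝ) (hW : 0 < W) (hδ : 0 < δ) (ha : 0 < a) (hWa : 4*W ≤ a) :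
    volume {d : ℂ | |d.re| ≤ 2*W ∧ a ≤ ‖d‖ ∧ ‖d‖ ≤ a + δ} ≤
      ENNReal.ofReal (16 * W * δ) := by
  set R2 : Set (ℝ × ℝ) := {p : ℝ × ℝ | |p.1| ≤ 2*W ∧ a ≤ Real.sqrt (p.1^2+p.2^2) ∧
      Real.sqrt (p.1^2+p.2^2) ≤ a + δ} with hR2def
  have hD2R : {d : ℂ | |d.re| ≤ 2*W ∧ a ≤ ‖d‖ ∧ ‖d‖ ≤ a + δ}
      = Complex.measurableEquivRealProd ⁻¹' R2 := by
    ext d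
    simp [hR2def, Complex.measurableEquivRealProd_apply, complex_abs_eq_sqrt]
  have hR2closed : IsClosed R2 := by
    have hc : Continuous fun p : ℝ × ℝ => Real.sqrt (p.1^2+p.2^2) :=
      ((continuous_fst.pow 2).add (continuous_snd.pow 2)).sqrt
    exact ((isClosed_le (continuous_fst.abs) continuous_const).inter
      ((isClosed_le continuous_const hc).inter (isClosed_le hc continuous_const)))
  rw [hD2R, vol_complex_preimage _ hR2closed.measurableSet, Measure.volume_eq_prod,
    Measure.prod_apply hR2closed.measurableSet]
  have hbound : ∀ u : ℝ, volume (Prod.mk u ⁻¹' R2) ≤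
      (Set.Icc (-(2*W)) (2*W)).indicator (fun _ => ENNReal.ofReal (4*δ)) u := by
    intro u
    by_cases hu : |u| ≤ 2*W
    · rw [Set.indicator_of_mem (by rw [Set.mem_Icc, ← abs_le]; exact hu)]
      set fu := Real.sqrt (a^2 - u^2) with hfu
      set gu := Real.sqrt ((a+δ)^2 - u^2) with hgu
      have hu2 : u^2 ≤ (2*W)^2 := by
        rw [← sq_abs]; exact pow_le_pow_left₀ (abs_nonneg u) hu 2
      have hua : u^2 ≤ a^2/4 := by nlinarith
      have h2 : (0:ℝ) ≤ a^2 - u^2 := by nlinarith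
      have hfu2 : fu^2 = a^2 - u^2 := Real.sq_sqrt h2
      have hfa : a/2 ≤ fu := by
        rw [hfu]; exact (Real.le_sqrt (by positivity) h2).mpr (by nlinarith)
      have hgf : gu ≤ fu + 2*δ := by
        rw [hgu]
        calc Real.sqrt ((a+δ)^2 - u^2) ≤ Real.sqrt ((fu + 2*δ)^2) :=
              Real.sqrt_le_sqrt (by nlinarith)
          _ = fu + 2*δ := Real.sqrt_sq (by positivity)
      have hslice : Prod.mk u ⁻¹' R2 ⊆ Set.Icc fu gu ∪ Set.Icc (-gu) (-fu) := by
        rintro v ⟨-, h1, h2'⟩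
        have h1' : a^2 ≤ u^2 + v^2 := (Real.le_sqrt ha.le (by positivity)).mp h1
        have h2'' : u^2 + v^2 ≤ (a+δ)^2 := by
          nlinarith [Real.sq_sqrt (show (0:ℝ) ≤ u^2+v^2 by positivity),
            Real.sqrt_nonneg (u^2+v^2)]
        have hfv : fu ≤ |v| := by
          rw [hfu, ← Real.sqrt_sq_eq_abs]
          exact Real.sqrt_le_sqrt (by nlinarith)
        have hgv : |v| ≤ gu := by
          rw [hgu, ← Real.sqrt_sq_eq_abs]
          exact Real.sqrt_le_sqrt (by nlinarith)
        rcases le_or_gt 0 v with hv | hv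
        · left; rw [abs_of_nonneg hv] at hfv hgv; exact ⟨hfv, hgv⟩
        · right; rw [abs_of_neg hv] at hfv hgv
          constructor <;> linarith
      calc volume (Prod.mk u ⁻¹' R2) ≤ volume (Set.Icc fu gu ∪ Set.Icc (-gu) (-fu)) :=
            measure_mono hslice
        _ ≤ volume (Set.Icc fu gu) + volume (Set.Icc (-gu) (-fu)) := measure_union_le _ _
        _ = ENNReal.ofReal (gu - fu) + ENNReal.ofReal (-fu - -gu) := by
            rw [Real.volume_Icc, Real.volume_Icc]
        _ ≤ ENNReal.ofReal (2*δ) + ENNReal.ofReal (2*δ) := by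
            gcongr <;> linarith
        _ = ENNReal.ofReal (4*δ) := by
            rw [← ENNReal.ofReal_add (by positivity) (by positivity)]; congr 1; ring
    · have : Prod.mk u ⁻¹' R2 = ∅ := by
        ext v; simp only [Set.mem_preimage, hR2def, Set.mem_setOf_eq, Set.mem_empty_iff_false,
          iff_false, not_and]
        intro h; exact absurd h hu
      rw [this]
      simp
  calc ∫⁻ u, volume (Prod.mk u ⁻¹' R2) ≤
      ∫⁻ u, (Set.Icc (-(2*W)) (2*W)).indicator (fun _ => ENNReal.ofReal (4*δ)) u :=
        lintegral_mono hbound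
    _ = ENNReal.ofReal (4*δ) * volume (Set.Icc (-(2*W)) (2*W)) := by
        rw [lintegral_indicator measurableSet_Icc, setLIntegral_const]
    _ ≤ ENNReal.ofReal (16 * W * δ) := by
        rw [Real.volume_Icc, ← ENNReal.ofReal_mul (by positivity)]
        apply ENNReal.ofReal_le_ofReal
        nlinarith

/-- The rectangle `X₁ = {(x,y) : |x| ≤ n^{3/7}, |y| ≤ 0.99·n^{4/7}}`, with the plane
modeled by `ℂ`. -/
noncomputable def X1 (n : ℕ) : Set ℂ :=
  {z : ℂ | |z.re| ≤ (n : ℝ) ^ ((3 : ℝ) / 7) ∧ |z.im| ≤ 0.99 * (n : ℝ) ^ ((4 : ℝ) / 7)}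

lemma main_bounds (n : ℕ) (T F a δ : ℝ)
    (hTdef : T = (n : ℝ) ^ ((3 : ℝ) / 7)) (hFdef : F = (n : ℝ) ^ ((4 : ℝ) / 7))
    (hnpos : (0:ℝ) < n) (hT1 : 1 ≤ T) (hF100 : (100:ℝ) ≤ F) (hTF : T * F = (n:ℝ))
    (ha1 : 1 ≤ a) (ha2 : a ≤ 1.96 * F) (hδ0 : 0 < δ) (hδle : δ ≤ 1 / min a T) :
        ENNReal.ofReal (1/400 * (n : ℝ) * min a T * δ) ≤
          volume {zw : ℂ × ℂ | zw.1 ∈ X1 n ∧ zw.2 ∈ X1 n ∧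
            a ≤ dist zw.1 zw.2 ∧ dist zw.1 zw.2 ≤ a + δ} ∧
        volume {zw : ℂ × ℂ | zw.1 ∈ X1 n ∧ zw.2 ∈ X1 n ∧
            a ≤ dist zw.1 zw.2 ∧ dist zw.1 zw.2 ≤ a + δ} ≤
          ENNReal.ofReal (300 * (n : ℝ) * min a T * δ) := by
  set m : ℝ := min a T with hmdef
  have hTpos : (0:ℝ) < T := by linarith
  have hFpos : (0:ℝ) < F := by linarith
  have hm1 : (1:ℝ) ≤ m := le_min ha1 hT1
  have hmpos : (0:ℝ) < m := by linarith
  have hma : m ≤ a := min_le_left _ _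
  have hmT : m ≤ T := min_le_right _ _
  have hδ1 : δ ≤ 1 := by
    have h : 1/m ≤ 1 := by rw [div_le_one hmpos]; exact hm1
    linarith [hδle.trans h]
  have hδa : δ ≤ a := hδ1.trans ha1
  have hapos : (0:ℝ) < a := by linarith
  constructor
  · -- LOWER BOUND
    set U : ℝ := m/2 with hUdef
    set Rect : Set ℂ := Complex.measurableEquivRealProd ⁻¹'
      (Set.Ioo (-T) 0 ×ˢ Set.Ioo (-(0.99*F)) (-(0.99*F) + 0.01*F)) with hRectdef
    set Dlow : Set ℂ := Complex.measurableEquivRealProd ⁻¹'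
      (regionBetween (fun u => Real.sqrt (a^2 - u^2))
        (fun u => Real.sqrt ((a+δ)^2 - u^2)) (Set.Ioo 0 U)) with hDlowdef
    have hfc : Continuous fun u : ℝ => Real.sqrt (a^2 - u^2) :=
      (continuous_const.sub (continuous_pow 2)).sqrt
    have hgc : Continuous fun u : ℝ => Real.sqrt ((a+δ)^2 - u^2) :=
      (continuous_const.sub (continuous_pow 2)).sqrt
    -- openness of the shear set
    have hRectOpen : IsOpen Rect := by
      have : Rect = Complex.re ⁻¹' (Set.Ioo (-T) 0) ∩
          Complex.im ⁻¹' (Set.Ioo (-(0.99*F)) (-(0.99*F) + 0.01*F)) := by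
        ext z
        simp [hRectdef, Complex.measurableEquivRealProd_apply]
      rw [this]
      exact (isOpen_Ioo.preimage Complex.continuous_re).inter
        (isOpen_Ioo.preimage Complex.continuous_im)
    have hDlowOpen : IsOpen Dlow := by
      have : Dlow = Complex.re ⁻¹' (Set.Ioo 0 U) ∩
          ({d : ℂ | Real.sqrt (a^2 - d.re^2) < d.im} ∩
           {d : ℂ | d.im < Real.sqrt ((a+δ)^2 - d.re^2)}) := by
        ext d
        simp only [hDlowdef, Set.mem_preimage, regionBetween, Set.mem_setOf_eq,
          Complex.measurableEquivRealProd_apply, Set.mem_inter_iff, Set.mem_Ioo]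
        try tauto
      rw [this]
      exact (isOpen_Ioo.preimage Complex.continuous_re).inter
        ((isOpen_lt (hfc.comp Complex.continuous_re) Complex.continuous_im).inter
         (isOpen_lt Complex.continuous_im (hgc.comp Complex.continuous_re)))
    have hSlowOpen : IsOpen {p : ℂ × ℂ | p.1 ∈ Rect ∧ p.2 - p.1 ∈ Dlow} := by
      have : {p : ℂ × ℂ | p.1 ∈ Rect ∧ p.2 - p.1 ∈ Dlow} =
          Prod.fst ⁻¹' Rect ∩ (fun p : ℂ × ℂ => p.2 - p.1) ⁻¹' Dlow := rfl
      rw [this]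
      exact (hRectOpen.preimage continuous_fst).inter
        (hDlowOpen.preimage (continuous_snd.sub continuous_fst))
    -- the shear set is contained in the target set
    have hsub : {p : ℂ × ℂ | p.1 ∈ Rect ∧ p.2 - p.1 ∈ Dlow} ⊆
        {zw : ℂ × ℂ | zw.1 ∈ X1 n ∧ zw.2 ∈ X1 n ∧
          a ≤ dist zw.1 zw.2 ∧ dist zw.1 zw.2 ≤ a + δ} := by
      rintro ⟨p1, p2⟩ ⟨hz, hd⟩
      simp only [hRectdef, hDlowdef, Set.mem_preimage, Complex.measurableEquivRealProd_apply,
        Set.mem_prod, Set.mem_Ioo, regionBetween, Set.mem_setOf_eq, Complex.sub_re,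
        Complex.sub_im] at hz hd
      obtain ⟨⟨hz1, hz2⟩, hz3, hz4⟩ := hz
      obtain ⟨⟨hd1, hd2⟩, hd3, hd4⟩ := hd
      have hUa : U ≤ a/2 := by rw [hUdef]; linarith
      have hUT : U ≤ T/2 := by rw [hUdef]; linarith
      have hu_a : p2.re - p1.re < a/2 := lt_of_lt_of_le hd2 hUa
      have h2 : (0:ℝ) ≤ a^2 - (p2.re - p1.re)^2 := by nlinarith
      have h3 : (0:ℝ) ≤ (a+δ)^2 - (p2.re - p1.re)^2 := by nlinarith
      have hfnn : (0:ℝ) ≤ Real.sqrt (a^2 - (p2.re - p1.re)^2) := Real.sqrt_nonneg _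
      have hgu : Real.sqrt ((a+δ)^2 - (p2.re - p1.re)^2) ≤ a + δ := by
        calc Real.sqrt ((a+δ)^2 - (p2.re - p1.re)^2) ≤ Real.sqrt ((a+δ)^2) :=
              Real.sqrt_le_sqrt (by nlinarith)
          _ = a + δ := Real.sqrt_sq (by linarith)
      have hv0 : 0 < p2.im - p1.im := lt_of_le_of_lt hfnn hd3
      have hdist : dist p1 p2 = Real.sqrt ((p2.re - p1.re)^2 + (p2.im - p1.im)^2) := by
        rw [Complex.dist_eq, complex_abs_eq_sqrt, Complex.sub_re, Complex.sub_im]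
        ring_nf
      refine ⟨⟨?_, ?_⟩, ⟨?_, ?_⟩, ?_, ?_⟩
      · rw [abs_le]; constructor <;> linarith
      · rw [abs_le]; constructor <;> linarith
      · rw [abs_le]; constructor <;> linarith
      · rw [abs_le]; constructor <;> linarith
      · rw [hdist]
        refine (Real.le_sqrt hapos.le (by positivity)).mpr ?_
        nlinarith [Real.sq_sqrt h2]
      · rw [hdist]
        calc Real.sqrt ((p2.re - p1.re)^2 + (p2.im - p1.im)^2) ≤ Real.sqrt ((a+δ)^2) := by
              apply Real.sqrt_le_sqrt
              nlinarith [Real.sq_sqrt h3]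
          _ = a + δ := Real.sqrt_sq (by linarith)
    -- volumes
    have hRectVol : volume Rect = ENNReal.ofReal T * ENNReal.ofReal (0.01*F) := by
      rw [hRectdef, vol_complex_preimage _ (measurableSet_Ioo.prod measurableSet_Ioo),
        Measure.volume_eq_prod, Measure.prod_prod, Real.volume_Ioo, Real.volume_Ioo]
      congr 2 <;> ring
    have hShear : volume {p : ℂ × ℂ | p.1 ∈ Rect ∧ p.2 - p.1 ∈ Dlow} =
        volume Rect * volume Dlow := vol_shear_eq Rect Dlow hSlowOpen.measurableSet
    have hDlowVol : ENNReal.ofReal (U * (δ/2)) ≤ volume Dlow := by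
      rw [hDlowdef]
      exact Dlow_volume a δ U ha1 hδ0 (by rw [hUdef]; linarith) (by rw [hUdef]; linarith) hδa
    calc ENNReal.ofReal (1/400 * n * m * δ)
        ≤ ENNReal.ofReal ((T * (0.01*F)) * (U * (δ/2))) := by
          apply ENNReal.ofReal_le_ofReal
          have h001 : T * (0.01*F) = 0.01 * (n:ℝ) := by rw [← hTF]; ring
          rw [h001, hUdef]
          nlinarith
      _ = ENNReal.ofReal T * ENNReal.ofReal (0.01*F) * ENNReal.ofReal (U * (δ/2)) := by
          rw [ENNReal.ofReal_mul (by positivity), ENNReal.ofReal_mul (by positivity)]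
      _ ≤ volume Rect * volume Dlow := by
          rw [hRectVol]
          exact mul_le_mul_right hDlowVol _
      _ = volume {p : ℂ × ℂ | p.1 ∈ Rect ∧ p.2 - p.1 ∈ Dlow} := hShear.symm
      _ ≤ _ := measure_mono hsub
  · -- UPPER BOUND
    set D2 : Set ℂ := {d : ℂ | |d.re| ≤ 2*T ∧ a ≤ ‖d‖ ∧ ‖d‖ ≤ a + δ}
      with hD2def
    have hX1closed : IsClosed (X1 n) := by
      have : X1 n = {z : ℂ | |z.re| ≤ T} ∩ {z : ℂ | |z.im| ≤ 0.99*F} := by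
        ext z; simp [X1, ← hTdef, ← hFdef]
      rw [this]
      exact (isClosed_le (Complex.continuous_re.abs) continuous_const).inter
        (isClosed_le (Complex.continuous_im.abs) continuous_const)
    have hD2closed : IsClosed D2 := by
      rw [hD2def]
      exact (isClosed_le (Complex.continuous_re.abs) continuous_const).inter
        ((isClosed_le continuous_const continuous_norm).inter
         (isClosed_le continuous_norm continuous_const))
    have hSupClosed : IsClosed {p : ℂ × ℂ | p.1 ∈ X1 n ∧ p.2 - p.1 ∈ D2} := by
      have : {p : ℂ × ℂ | p.1 ∈ X1 n ∧ p.2 - p.1 ∈ D2} =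
          Prod.fst ⁻¹' (X1 n) ∩ (fun p : ℂ × ℂ => p.2 - p.1) ⁻¹' D2 := rfl
      rw [this]
      exact (hX1closed.preimage continuous_fst).inter
        (hD2closed.preimage (continuous_snd.sub continuous_fst))
    have hsub : {zw : ℂ × ℂ | zw.1 ∈ X1 n ∧ zw.2 ∈ X1 n ∧
          a ≤ dist zw.1 zw.2 ∧ dist zw.1 zw.2 ≤ a + δ} ⊆
        {p : ℂ × ℂ | p.1 ∈ X1 n ∧ p.2 - p.1 ∈ D2} := by
      rintro ⟨p1, p2⟩ ⟨h1, h2, h3, h4⟩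
      obtain ⟨h1a, h1b⟩ := h1
      obtain ⟨h2a, h2b⟩ := h2
      refine ⟨⟨h1a, h1b⟩, ?_, ?_, ?_⟩
      · rw [Complex.sub_re]
        calc |p2.re - p1.re| ≤ |p2.re| + |p1.re| := abs_sub _ _
          _ ≤ 2*T := by rw [← hTdef] at h1a h2a; linarith
      · rwa [show ‖p2 - p1‖ = dist p1 p2 by
          rw [Complex.dist_eq]; exact norm_sub_rev p2 p1]
      · rwa [show ‖p2 - p1‖ = dist p1 p2 by
          rw [Complex.dist_eq]; exact norm_sub_rev p2 p1]
    have hX1Vol : volume (X1 n) = ENNReal.ofReal (2*T) * ENNReal.ofReal (1.98*F) := by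
      have hX1eq : X1 n = Complex.measurableEquivRealProd ⁻¹'
          (Set.Icc (-T) T ×ˢ Set.Icc (-(0.99*F)) (0.99*F)) := by
        ext z
        simp only [X1, ← hTdef, ← hFdef, Set.mem_setOf_eq, Set.mem_preimage,
          Complex.measurableEquivRealProd_apply, Set.mem_prod, Set.mem_Icc, abs_le]
        try tauto
      rw [hX1eq, vol_complex_preimage _ (measurableSet_Icc.prod measurableSet_Icc),
        Measure.volume_eq_prod, Measure.prod_prod, Real.volume_Icc, Real.volume_Icc]
      congr 2 <;> ring
    have hShear : volume {p : ℂ × ℂ | p.1 ∈ X1 n ∧ p.2 - p.1 ∈ D2} =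
        volume (X1 n) * volume D2 := vol_shear_eq (X1 n) D2 hSupClosed.measurableSet
    have hD2Vol : volume D2 ≤ ENNReal.ofReal (48 * (m * δ)) := by
      rcases le_or_gt a (4*T) with h4T | h4T
      · refine le_trans (D2_volume_near a δ T hapos hδ0) (ENNReal.ofReal_le_ofReal ?_)
        have ham4 : a ≤ 4*m := by
          rcases le_total a T with h | h
          · have : m = a := min_eq_left h
            rw [this]; linarith
          · have : m = T := min_eq_right h
            rw [this]; linarith
        have hnn : (0:ℝ) ≤ 2*a*δ+δ^2 := by positivity
        nlinarith [mul_le_mul_of_nonneg_right Real.pi_le_four hnn,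
          mul_le_mul_of_nonneg_right ham4 hδ0.le,
          mul_le_mul_of_nonneg_right hδ1 hδ0.le,
          mul_le_mul_of_nonneg_right hm1 hδ0.le]
      · have hmT' : m = T := min_eq_right (by linarith)
        refine le_trans (D2_volume_far a δ T hTpos hδ0 hapos (by linarith))
          (ENNReal.ofReal_le_ofReal ?_)
        rw [hmT']
        nlinarith
    calc volume {zw : ℂ × ℂ | zw.1 ∈ X1 n ∧ zw.2 ∈ X1 n ∧
          a ≤ dist zw.1 zw.2 ∧ dist zw.1 zw.2 ≤ a + δ}
        ≤ volume {p : ℂ × ℂ | p.1 ∈ X1 n ∧ p.2 - p.1 ∈ D2} := measure_mono hsub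
      _ = volume (X1 n) * volume D2 := hShear
      _ ≤ (ENNReal.ofReal (2*T) * ENNReal.ofReal (1.98*F)) * ENNReal.ofReal (48 * (m * δ)) := by
          rw [hX1Vol]
          exact mul_le_mul_right hD2Vol _
      _ ≤ ENNReal.ofReal (300 * n * m * δ) := by
          rw [← ENNReal.ofReal_mul (by positivity), ← ENNReal.ofReal_mul (by positivity)]
          apply ENNReal.ofReal_le_ofReal
          have he : 2*T*(1.98*F)*(48*(m*δ)) = 190.08*((T*F)*(m*δ)) := by ring
          rw [he, hTF]
          nlinarith [mul_nonneg (mul_nonneg hnpos.le hmpos.le) hδ0.le]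


/-- For `1 ≤ a ≤ 1.96·n^{4/7}` and `0 < δ ≤ 1/min(a, n^{3/7})`, the 4-dimensional
Lebesgue measure of the pairs `(x, y) ∈ X₁ × X₁` with `a ≤ dist x y ≤ a + δ` is
`Θ(n · min(a, n^{3/7}) · δ)`. -/
theorem measure_annulus_pairs_X1 :
    ∃ c C : ℝ, 0 < c ∧ 0 < C ∧ ∃ n₀ : ℕ, ∀ n : ℕ, n₀ ≤ n →
      ∀ a : ℝ, 1 ≤ a → a ≤ 1.96 * (n : ℝ) ^ ((4 : ℝ) / 7) →
      ∀ δ : ℝ, 0 < δ → δ ≤ 1 / min a ((n : ℝ) ^ ((3 : ℝ) / 7)) →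
        ENNReal.ofReal (c * (n : ℝ) * min a ((n : ℝ) ^ ((3 : ℝ) / 7)) * δ) ≤
          volume {zw : ℂ × ℂ | zw.1 ∈ X1 n ∧ zw.2 ∈ X1 n ∧
            a ≤ dist zw.1 zw.2 ∧ dist zw.1 zw.2 ≤ a + δ} ∧
        volume {zw : ℂ × ℂ | zw.1 ∈ X1 n ∧ zw.2 ∈ X1 n ∧
            a ≤ dist zw.1 zw.2 ∧ dist zw.1 zw.2 ≤ a + δ} ≤
          ENNReal.ofReal (C * (n : ℝ) * min a ((n : ℝ) ^ ((3 : ℝ) / 7)) * δ) := by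
  refine ⟨1/400, 300, by norm_num, by norm_num, 10^6, ?_⟩
  intro n hn a ha1 ha2 δ hδ0 hδle
  have hn6 : ((10:ℝ)^6) ≤ (n : ℝ) := by exact_mod_cast hn
  have hn1 : (1:ℝ) ≤ (n:ℝ) := le_trans (by norm_num) hn6
  have hnpos : (0:ℝ) < n := by linarith
  have hT1 : 1 ≤ (n : ℝ) ^ ((3 : ℝ) / 7) := Real.one_le_rpow hn1 (by norm_num)
  have hF100 : (100:ℝ) ≤ (n : ℝ) ^ ((4 : ℝ) / 7) := by
    have hF1 : ((10:ℝ)^6) ^ ((4:ℝ)/7) ≤ (n : ℝ) ^ ((4 : ℝ) / 7) :=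
      Real.rpow_le_rpow (by positivity) hn6 (by norm_num)
    have e1 : ((10:ℝ)^6) ^ ((4:ℝ)/7) = (10:ℝ) ^ ((6:ℝ) * ((4:ℝ)/7)) := by
      rw [← Real.rpow_natCast 10 6, ← Real.rpow_mul (by norm_num)]
      norm_num
    have e2 : (100:ℝ) = (10:ℝ) ^ ((2:ℝ)) := by
      rw [show (2:ℝ) = ((2:ℕ):ℝ) by norm_num, Real.rpow_natCast]; norm_num
    have hF2 : (100:ℝ) ≤ ((10:ℝ)^6) ^ ((4:ℝ)/7) := by
      rw [e1, e2]
      exact Real.rpow_le_rpow_of_exponent_le (by norm_num) (by norm_num)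
    linarith
  have hTF : (n : ℝ) ^ ((3 : ℝ) / 7) * (n : ℝ) ^ ((4 : ℝ) / 7) = (n:ℝ) := by
    rw [← Real.rpow_add hnpos]
    norm_num
  exact main_bounds n _ _ a δ rfl rfl hnpos hT1 hF100 hTF ha1 ha2 hδ0 hδle
end
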